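/- Let S = K[x_1,…,x_n] be a standard graded polynomial ring over a field K and I = ⟨f⟩ a principal ideal generated by a nonzero homogeneous polynomial f of positive degree. Then for every k ≥ 1 and every p ∈ Ass(I^k) one has v_p(I^k) = α(I)·k − α(p); in particular v(I^k) = α(I)·k − c(I) for all k ≥ 1, where c(I) := max{α(p) : p ∈ Ass(I)}. -/

import Mathlib

open MvPolynomial

/-- A graded (homogeneous) ideal: one generated by homogeneous polynomials. -/
def IsHomogeneousIdeal {K : Type*} [Field K] {n : ℕ}
    (I : Ideal (MvPolynomial (Fin n) K)) : Prop :=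
  ∃ G : Set (MvPolynomial (Fin n) K),
    (∀ f ∈ G, ∃ d, f.IsHomogeneous d) ∧ I = Ideal.span G

/-- `Ass(I)`: the associated primes of `S/I`. -/
def Ass {K : Type*} [Field K] {n : ℕ} (I : Ideal (MvPolynomial (Fin n) K)) :
    Set (Ideal (MvPolynomial (Fin n) K)) :=
  associatedPrimes (MvPolynomial (Fin n) K) (MvPolynomial (Fin n) K ⧸ I)

/-- The local v-number `v_p(I)`. -/
noncomputable def vNumberAt {K : Type*} [Field K] {n : ℕ}
    (I p : Ideal (MvPolynomial (Fin n) K)) : ℕ :=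
  sInf {d | ∃ f : MvPolynomial (Fin n) K, f.IsHomogeneous d ∧
    I.colon (Ideal.span {f}) = p}

/-- The v-number `v(I)`. -/
noncomputable def vNumber {K : Type*} [Field K] {n : ℕ}
    (I : Ideal (MvPolynomial (Fin n) K)) : ℕ :=
  sInf {d | ∃ f : MvPolynomial (Fin n) K, ∃ p ∈ Ass I, f.IsHomogeneous d ∧
    I.colon (Ideal.span {f}) = p}

/-- `α(J)`: the least degree of a nonzero element of `J`. -/
noncomputable def alphaNum {K : Type*} [Field K] {n : ℕ}
    (J : Ideal (MvPolynomial (Fin n) K)) : ℕ :=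
  sInf {d | ∃ f ∈ J, f ≠ 0 ∧ f.totalDegree = d}

/-- `c(I) = max{α(p) : p ∈ Ass(I)}`. -/
noncomputable def cNum {K : Type*} [Field K] {n : ℕ}
    (I : Ideal (MvPolynomial (Fin n) K)) : ℕ :=
  sSup (alphaNum '' Ass I)

section Aux

variable {K : Type*} [Field K] {n : ℕ}

lemma isHom_iff' {φ : MvPolynomial (Fin n) K} {m : ℕ} :
    φ.IsHomogeneous m ↔ ∀ d : Fin n →₀ ℕ, coeff d φ ≠ 0 → d.degree = m := by
  unfold MvPolynomial.IsHomogeneous MvPolynomial.IsWeightedHomogeneous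
  simp [← Finsupp.degree_eq_weight_one]
  exact ⟨fun h d hd => by rw [Finsupp.degree_eq_weight_one]; exact h hd,
    fun h d hd => by rw [← h d hd, Finsupp.degree_eq_weight_one]; rfl⟩

lemma degAdd (a b : Fin n →₀ ℕ) : (a + b).degree = a.degree + b.degree := by
  simp [Finsupp.degree_eq_weight_one]

lemma coeff_mul_comp (x y : MvPolynomial (Fin n) K) (a b : ℕ)
    (h : ∀ d d' : Fin n →₀ ℕ, coeff d x ≠ 0 → coeff d' y ≠ 0 →
      d.degree + d'.degree = a + b → d.degree = a ∧ d'.degree = b)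
    (μ : Fin n →₀ ℕ) (hμ : μ.degree = a + b) :
    coeff μ (x * y) =
      coeff μ (homogeneousComponent a x * homogeneousComponent b y) := by
  rw [coeff_mul, coeff_mul]
  refine Finset.sum_congr rfl ?_
  rintro ⟨d, d'⟩ hd
  rw [Finset.HasAntidiagonal.mem_antidiagonal] at hd
  rw [coeff_homogeneousComponent, coeff_homogeneousComponent]
  by_cases h1 : coeff d x = 0
  · simp [h1]
  by_cases h2 : coeff d' y = 0
  · simp [h2]
  have hsum : d.degree + d'.degree = a + b := by rw [← degAdd, hd, hμ]
  obtain ⟨e1, e2⟩ := h d d' h1 h2 hsum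
  simp [e1, e2]

lemma comp_key {x y : MvPolynomial (Fin n) K} {m : ℕ} (hxy : (x * y).IsHomogeneous m)
    (a b : ℕ) (hxa : homogeneousComponent a x ≠ 0) (hyb : homogeneousComponent b y ≠ 0)
    (h : ∀ d d' : Fin n →₀ ℕ, coeff d x ≠ 0 → coeff d' y ≠ 0 →
      d.degree + d'.degree = a + b → d.degree = a ∧ d'.degree = b) :
    a + b = m := by
  have hprod : homogeneousComponent a x * homogeneousComponent b y ≠ 0 :=
    mul_ne_zero hxa hyb
  have hhom : (homogeneousComponent a x * homogeneousComponent b y).IsHomogeneous (a + b) :=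
    (homogeneousComponent_isHomogeneous a x).mul (homogeneousComponent_isHomogeneous b y)
  obtain ⟨μ, hμ⟩ := MvPolynomial.ne_zero_iff.1 hprod
  have hdeg : μ.degree = a + b := isHom_iff'.1 hhom μ hμ
  have hc : coeff μ (x * y) ≠ 0 := by
    rw [coeff_mul_comp x y a b h μ hdeg]; exact hμ
  have := isHom_iff'.1 hxy μ hc
  omega

lemma comp_ne_zero_of_witness {x : MvPolynomial (Fin n) K} {μ : Fin n →₀ ℕ}
    (hμ : coeff μ x ≠ 0) : homogeneousComponent μ.degree x ≠ 0 := by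
  intro h
  have h2 : coeff μ (homogeneousComponent μ.degree x) = coeff μ x := by
    rw [coeff_homogeneousComponent]
    simp
  rw [h, coeff_zero] at h2
  exact hμ h2.symm

lemma mul_degree_lemma {x y : MvPolynomial (Fin n) K} (hx : x ≠ 0) (hy : y ≠ 0) {m : ℕ}
    (hxy : (x * y).IsHomogeneous m) :
    ∃ a b : ℕ, a + b = m ∧ x.IsHomogeneous a ∧ y.IsHomogeneous b := by
  have hsx : x.support.Nonempty := MvPolynomial.support_nonempty.2 hx
  have hsy : y.support.Nonempty := MvPolynomial.support_nonempty.2 hy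
  obtain ⟨μa, hμa, ha⟩ := Finset.exists_mem_eq_inf' hsx Finsupp.degree
  obtain ⟨μA, hμA, hA⟩ := Finset.exists_mem_eq_sup' hsx Finsupp.degree
  obtain ⟨μb, hμb, hb⟩ := Finset.exists_mem_eq_inf' hsy Finsupp.degree
  obtain ⟨μB, hμB, hB⟩ := Finset.exists_mem_eq_sup' hsy Finsupp.degree
  set a := x.support.inf' hsx Finsupp.degree with hadef
  set A := x.support.sup' hsx Finsupp.degree with hAdef
  set b := y.support.inf' hsy Finsupp.degree with hbdef
  set B := y.support.sup' hsy Finsupp.degree with hBdef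
  have hab : a + b = m := by
    refine comp_key hxy a b ?_ ?_ ?_
    · exact ha ▸ comp_ne_zero_of_witness (MvPolynomial.mem_support_iff.1 hμa)
    · exact hb ▸ comp_ne_zero_of_witness (MvPolynomial.mem_support_iff.1 hμb)
    · intro d d' hd hd' hsum
      have h1 : a ≤ d.degree := Finset.inf'_le _ (MvPolynomial.mem_support_iff.2 hd)
      have h2 : b ≤ d'.degree := Finset.inf'_le _ (MvPolynomial.mem_support_iff.2 hd')
      omega
  have hAB : A + B = m := by
    refine comp_key hxy A B ?_ ?_ ?_
    · exact hA ▸ comp_ne_zero_of_witness (MvPolynomial.mem_support_iff.1 hμA)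
    · exact hB ▸ comp_ne_zero_of_witness (MvPolynomial.mem_support_iff.1 hμB)
    · intro d d' hd hd' hsum
      have h1 : d.degree ≤ A := Finset.le_sup' _ (MvPolynomial.mem_support_iff.2 hd)
      have h2 : d'.degree ≤ B := Finset.le_sup' _ (MvPolynomial.mem_support_iff.2 hd')
      omega
  have haA : a ≤ A := ha ▸ Finset.le_sup' _ hμa
  have hbB : b ≤ B := hb ▸ Finset.le_sup' _ hμb
  have heqa : a = A := by omega
  have heqb : b = B := by omega
  refine ⟨a, b, hab, ?_, ?_⟩
  · refine isHom_iff'.2 fun d hd => ?_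
    have h1 : a ≤ d.degree := Finset.inf'_le _ (MvPolynomial.mem_support_iff.2 hd)
    have h2 : d.degree ≤ A := Finset.le_sup' _ (MvPolynomial.mem_support_iff.2 hd)
    omega
  · refine isHom_iff'.2 fun d hd => ?_
    have h1 : b ≤ d.degree := Finset.inf'_le _ (MvPolynomial.mem_support_iff.2 hd)
    have h2 : d.degree ≤ B := Finset.le_sup' _ (MvPolynomial.mem_support_iff.2 hd)
    omega

lemma exists_coeff_of_mul {x g : MvPolynomial (Fin n) K} (hx : x ≠ 0) {e : ℕ}
    (hg : g.IsHomogeneous e) (hg0 : g ≠ 0) :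
    ∃ μ : Fin n →₀ ℕ, coeff μ (x * g) ≠ 0 ∧ e ≤ μ.degree := by
  have hsx : x.support.Nonempty := MvPolynomial.support_nonempty.2 hx
  obtain ⟨μa, hμa, ha⟩ := Finset.exists_mem_eq_inf' hsx Finsupp.degree
  set a := x.support.inf' hsx Finsupp.degree with hadef
  have hcond : ∀ d d' : Fin n →₀ ℕ, coeff d x ≠ 0 → coeff d' g ≠ 0 →
      d.degree + d'.degree = a + e → d.degree = a ∧ d'.degree = e := by
    intro d d' hd hd' hsum
    have h1 : a ≤ d.degree := Finset.inf'_le _ (MvPolynomial.mem_support_iff.2 hd)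
    have h2 : d'.degree = e := isHom_iff'.1 hg d' hd'
    omega
  have hxa : homogeneousComponent a x ≠ 0 :=
    ha ▸ comp_ne_zero_of_witness (MvPolynomial.mem_support_iff.1 hμa)
  obtain ⟨μg, hμg⟩ := MvPolynomial.ne_zero_iff.1 hg0
  have hge : homogeneousComponent e g ≠ 0 := by
    have := isHom_iff'.1 hg μg hμg
    exact this ▸ comp_ne_zero_of_witness hμg
  have hprod : homogeneousComponent a x * homogeneousComponent e g ≠ 0 := mul_ne_zero hxa hge
  obtain ⟨μ, hμ⟩ := MvPolynomial.ne_zero_iff.1 hprod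
  have hhom : (homogeneousComponent a x * homogeneousComponent e g).IsHomogeneous (a + e) :=
    (homogeneousComponent_isHomogeneous a x).mul (homogeneousComponent_isHomogeneous e g)
  have hdeg : μ.degree = a + e := isHom_iff'.1 hhom μ hμ
  refine ⟨μ, ?_, by omega⟩
  rw [coeff_mul_comp x g a e hcond μ hdeg]
  exact hμ

lemma totalDegree_ge_of_mul {x g : MvPolynomial (Fin n) K} (hx : x ≠ 0) {e : ℕ}
    (hg : g.IsHomogeneous e) (hg0 : g ≠ 0) : e ≤ (x * g).totalDegree := by
  obtain ⟨μ, hμ, he⟩ := exists_coeff_of_mul hx hg hg0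
  have := MvPolynomial.le_totalDegree (MvPolynomial.mem_support_iff.2 hμ)
  exact le_trans he this

end Aux


section Aux2

variable {K : Type*} [Field K] {n : ℕ}

lemma dvd_hom {F π : MvPolynomial (Fin n) K} {m : ℕ} (hF : F.IsHomogeneous m)
    (hF0 : F ≠ 0) (hdvd : π ∣ F) :
    ∃ (w : MvPolynomial (Fin n) K) (a b : ℕ), F = π * w ∧ a + b = m ∧
      π.IsHomogeneous a ∧ w.IsHomogeneous b ∧ π ≠ 0 ∧ w ≠ 0 := by
  obtain ⟨w, rfl⟩ := hdvd
  have hπ0 : π ≠ 0 := left_ne_zero_of_mul hF0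
  have hw0 : w ≠ 0 := right_ne_zero_of_mul hF0
  obtain ⟨a, b, hab, hπh, hwh⟩ := mul_degree_lemma hπ0 hw0 hF
  exact ⟨w, a, b, rfl, hab, hπh, hwh, hπ0, hw0⟩

lemma alphaNum_span {g : MvPolynomial (Fin n) K} {e : ℕ} (hg : g.IsHomogeneous e)
    (hg0 : g ≠ 0) : alphaNum (Ideal.span {g}) = e := by
  unfold alphaNum
  apply le_antisymm
  · exact Nat.sInf_le ⟨g, Ideal.mem_span_singleton_self g, hg0, hg.totalDegree hg0⟩
  · refine le_csInf ⟨e, g, Ideal.mem_span_singleton_self g, hg0, hg.totalDegree hg0⟩ ?_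
    rintro d ⟨h, hmem, h0, rfl⟩
    rw [Ideal.mem_span_singleton] at hmem
    obtain ⟨c, rfl⟩ := hmem
    have hc : c ≠ 0 := right_ne_zero_of_mul h0
    have := totalDegree_ge_of_mul hc hg hg0
    rwa [mul_comm] at this

lemma colon_eq {π w : MvPolynomial (Fin n) K} (hπ0 : π ≠ 0) (hw : w ≠ 0) :
    (Ideal.span {π * w}).colon (Ideal.span {w}) = Ideal.span {π} := by
  ext x
  rw [Ideal.mem_colon_span_singleton, Ideal.mem_span_singleton, Ideal.mem_span_singleton]
  constructor
  · intro h
    exact (mul_dvd_mul_iff_right hw).1 h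
  · rintro ⟨c, rfl⟩
    exact ⟨c, by ring⟩

lemma quot_smul (J : Ideal (MvPolynomial (Fin n) K)) (x w : MvPolynomial (Fin n) K) :
    x • (Ideal.Quotient.mk J w) = Ideal.Quotient.mk J (x * w) := rfl

lemma span_prime_mem_Ass {π w : MvPolynomial (Fin n) K} (hπ : Prime π) (hw : w ≠ 0) :
    Ideal.span {π} ∈ Ass (Ideal.span {π * w}) := by
  refine isAssociatedPrime_iff.2 ⟨(Ideal.span_singleton_prime hπ.ne_zero).2 hπ, Ideal.Quotient.mk _ w, ?_⟩
  ext x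
  rw [Submodule.mem_colon_singleton, Submodule.mem_bot, quot_smul, Ideal.Quotient.eq_zero_iff_mem,
    Ideal.mem_span_singleton, Ideal.mem_span_singleton]
  constructor
  · rintro ⟨c, rfl⟩
    exact ⟨c, by ring⟩
  · intro h
    exact (mul_dvd_mul_iff_right hw).1 h

lemma prime_dvd_all {a : MvPolynomial (Fin n) K} (ha : a ≠ 0) :
    ∀ h : MvPolynomial (Fin n) K, ¬ a ∣ h →
      ∃ π, Prime π ∧ π ∣ a ∧ ∀ x, a ∣ x * h → π ∣ x := by
  induction a using UniqueFactorizationMonoid.induction_on_prime with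
  | h₁ => exact absurd rfl ha
  | h₂ u hu => exact fun h hdvd => absurd (hu.dvd) hdvd
  | h₃ b p hb hp IH =>
    intro h hdvd
    by_cases hph : p ∣ h
    · obtain ⟨h', rfl⟩ := hph
      have hbh' : ¬ b ∣ h' := by
        rintro ⟨c, rfl⟩
        exact hdvd ⟨c, by ring⟩
      obtain ⟨π, hπ, hπb, hπall⟩ := IH hb h' hbh'
      refine ⟨π, hπ, hπb.mul_left p, fun x hx => ?_⟩
      apply hπall x
      obtain ⟨c, hc⟩ := hx
      refine ⟨c, mul_left_cancel₀ hp.ne_zero ?_⟩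
      calc p * (x * h') = x * (p * h') := by ring
        _ = p * b * c := hc
        _ = p * (b * c) := by ring
    · refine ⟨p, hp, dvd_mul_right p b, fun x hx => ?_⟩
      have : p ∣ x * h := dvd_trans (dvd_mul_right p b) hx
      rcases hp.dvd_or_dvd this with h1 | h2
      · exact h1
      · exact absurd h2 hph

lemma Ass_structure {F : MvPolynomial (Fin n) K} (hF0 : F ≠ 0)
    {p : Ideal (MvPolynomial (Fin n) K)} (hp : p ∈ Ass (Ideal.span {F})) :
    ∃ π, Prime π ∧ π ∣ F ∧ p = Ideal.span {π} := by
  obtain ⟨hprime, x, hx⟩ := isAssociatedPrime_iff.1 hp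
  obtain ⟨h, rfl⟩ := Ideal.Quotient.mk_surjective x
  have hmem : ∀ r : MvPolynomial (Fin n) K, r ∈ p ↔ F ∣ r * h := by
    intro r
    rw [hx, Submodule.mem_colon_singleton, Submodule.mem_bot, quot_smul,
      Ideal.Quotient.eq_zero_iff_mem, Ideal.mem_span_singleton]
  have hFh : ¬ F ∣ h := by
    intro hd
    exact hprime.ne_top ((Ideal.eq_top_iff_one _).2 ((hmem 1).2 (by simpa using hd)))
  obtain ⟨π, hπ, hπF, hall⟩ := prime_dvd_all hF0 h hFh
  refine ⟨π, hπ, hπF, ?_⟩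
  have hsub : p ≤ Ideal.span {π} := fun r hr =>
    Ideal.mem_span_singleton.2 (hall r ((hmem r).1 hr))
  have hFp : F ∈ p := (hmem F).2 (Dvd.intro h rfl)
  obtain ⟨m, b, hbd, hFe⟩ := WfDvdMonoid.max_power_factor hF0 hπ.irreducible
  have hb : b ∉ p := fun hbp => hbd (Ideal.mem_span_singleton.1 (hsub hbp))
  have hpow : π ^ m ∈ p := by
    rcases hprime.mem_or_mem (hFe ▸ hFp) with h1 | h2
    · exact h1
    · exact absurd h2 hb
  exact le_antisymm hsub ((Ideal.span_singleton_le_iff_mem p).2 (hprime.mem_of_pow_mem m hpow))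

lemma colon_lower {π w g : MvPolynomial (Fin n) K} {b e : ℕ} (hπ : Prime π)
    (hw : w.IsHomogeneous b) (hw0 : w ≠ 0) (hg : g.IsHomogeneous e)
    (hcolon : (Ideal.span {π * w}).colon (Ideal.span {g}) = Ideal.span {π}) : b ≤ e := by
  have hg0 : g ≠ 0 := by
    rintro rfl
    have h1 : (1 : MvPolynomial (Fin n) K) ∈ Ideal.span {π} := by
      rw [← hcolon, Ideal.mem_colon_span_singleton]
      simp
    exact hπ.not_isUnit (isUnit_of_dvd_one (Ideal.mem_span_singleton.1 h1))
  have hπmem : π ∈ (Ideal.span {π * w}).colon (Ideal.span {g}) := by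
    rw [hcolon]
    exact Ideal.mem_span_singleton_self π
  rw [Ideal.mem_colon_span_singleton, Ideal.mem_span_singleton] at hπmem
  have hwg : w ∣ g := (mul_dvd_mul_iff_left hπ.ne_zero).1 hπmem
  obtain ⟨c, rfl⟩ := hwg
  have hc : c ≠ 0 := right_ne_zero_of_mul hg0
  obtain ⟨μ, hcμ, hb⟩ := exists_coeff_of_mul hc hw hw0
  have hdeg : μ.degree = e := isHom_iff'.1 hg μ (by rwa [mul_comm w c])
  omega

lemma vNumberAt_eq {π w : MvPolynomial (Fin n) K} {b : ℕ} (hπ : Prime π)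
    (hw : w.IsHomogeneous b) (hw0 : w ≠ 0) :
    vNumberAt (Ideal.span {π * w}) (Ideal.span {π}) = b := by
  unfold vNumberAt
  apply le_antisymm
  · exact Nat.sInf_le ⟨w, hw, colon_eq hπ.ne_zero hw0⟩
  · refine le_csInf ⟨b, w, hw, colon_eq hπ.ne_zero hw0⟩ ?_
    rintro e ⟨g, hg, hcolon⟩
    exact colon_lower hπ hw hw0 hg hcolon

end Aux2

/-- Let `I = ⟨f⟩` be a principal ideal generated by a nonzero homogeneous
polynomial of positive degree. Then for every `k ≥ 1` and every `p ∈ Ass(I^k)`,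
`v_p(I^k) = α(I)·k − α(p)`; in particular `v(I^k) = α(I)·k − c(I)` for all `k ≥ 1`. -/
theorem stmt7 {K : Type*} [Field K] {n : ℕ}
    (f : MvPolynomial (Fin n) K) (d : ℕ) (hd : 0 < d)
    (hf : f.IsHomogeneous d) (hf0 : f ≠ 0)
    (I : Ideal (MvPolynomial (Fin n) K)) (hI : I = Ideal.span {f}) :
    ∀ k : ℕ, 1 ≤ k →
      (∀ p ∈ Ass (I ^ k),
        (vNumberAt (I ^ k) p : ℤ) = (alphaNum I : ℤ) * k - (alphaNum p : ℤ)) ∧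
      (vNumber (I ^ k) : ℤ) = (alphaNum I : ℤ) * k - (cNum I : ℤ) := by
  subst hI
  intro k hk
  have hfk : (f ^ k).IsHomogeneous (d * k) := hf.pow k
  have hfk0 : f ^ k ≠ 0 := pow_ne_zero k hf0
  have hIk : Ideal.span {f} ^ k = Ideal.span {f ^ k} := Ideal.span_singleton_pow f k
  have hαI : alphaNum (Ideal.span {f}) = d := alphaNum_span hf hf0
  have hcast : ((d * k : ℕ) : ℤ) = (d : ℤ) * (k : ℤ) := by push_cast; ring
  have part1 : ∀ p ∈ Ass (Ideal.span {f} ^ k), ∃ (a b : ℕ) (π : MvPolynomial (Fin n) K),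
      a + b = d * k ∧ Prime π ∧ π ∣ f ∧ π.IsHomogeneous a ∧ p = Ideal.span {π} ∧
      alphaNum p = a ∧ vNumberAt (Ideal.span {f} ^ k) p = b := by
    intro p hp
    rw [hIk] at hp
    obtain ⟨π, hπ, hπfk, rfl⟩ := Ass_structure hfk0 hp
    have hπf : π ∣ f := hπ.dvd_of_dvd_pow hπfk
    obtain ⟨w, a, b, hfe, hab, hπh, hwh, hπ0, hw0⟩ := dvd_hom hfk hfk0 hπfk
    refine ⟨a, b, π, hab, hπ, hπf, hπh, rfl, alphaNum_span hπh hπ0, ?_⟩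
    rw [hIk, hfe]
    exact vNumberAt_eq hπ hwh hw0
  refine ⟨?_, ?_⟩
  · intro p hp
    obtain ⟨a, b, π, hab, -, -, -, -, hα, hv⟩ := part1 p hp
    rw [hv, hα, hαI, ← hcast]
    generalize d * k = m at hab ⊢
    omega
  · -- not a unit
    have hfnu : ¬ IsUnit f := by
      intro hu
      obtain ⟨c0, hc0⟩ := (hu.dvd : f ∣ 1)
      have hc00 : c0 ≠ 0 := right_ne_zero_of_mul
        (fun h => one_ne_zero (α := MvPolynomial (Fin n) K) (by rw [hc0, h]))
      have hle := totalDegree_ge_of_mul hc00 hf hf0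
      rw [mul_comm, ← hc0, MvPolynomial.totalDegree_one] at hle
      omega
    obtain ⟨π₁, hirr, hπ₁f⟩ := WfDvdMonoid.exists_irreducible_factor hfnu hf0
    have hπ₁ : Prime π₁ := UniqueFactorizationMonoid.irreducible_iff_prime.1 hirr
    obtain ⟨w₁, hw₁⟩ := hπ₁f
    have hw₁0 : w₁ ≠ 0 := right_ne_zero_of_mul (fun h => hf0 (by rw [hw₁, h]))
    have hAssne : (Ass (Ideal.span {f})).Nonempty :=
      ⟨Ideal.span {π₁}, by rw [hw₁]; exact span_prime_mem_Ass hπ₁ hw₁0⟩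
    have hbdd : ∀ y ∈ alphaNum '' Ass (Ideal.span {f}), y ≤ d := by
      rintro y ⟨p, hp, rfl⟩
      obtain ⟨π, hπ, hπf, rfl⟩ := Ass_structure hf0 hp
      obtain ⟨w, a, b, hfe, hab, hπh, hwh, hπ0, hw0⟩ := dvd_hom hf hf0 hπf
      rw [alphaNum_span hπh hπ0]
      omega
    have hBdd : BddAbove (alphaNum '' Ass (Ideal.span {f})) := ⟨d, hbdd⟩
    have hcmem : cNum (Ideal.span {f}) ∈ alphaNum '' Ass (Ideal.span {f}) :=
      Nat.sSup_mem (hAssne.image _) hBdd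
    obtain ⟨p₀, hp₀, hc⟩ := hcmem
    obtain ⟨π₀, hπ₀, hπ₀f, rfl⟩ := Ass_structure hf0 hp₀
    obtain ⟨w₀, a₀, b₀, hfe₀, hab₀, hπ₀h, hw₀h, hπ₀0, hw₀0⟩ := dvd_hom hf hf0 hπ₀f
    have ha₀ : a₀ = cNum (Ideal.span {f}) := by rw [← hc, alphaNum_span hπ₀h hπ₀0]
    have hkk : k - 1 + 1 = k := Nat.sub_add_cancel hk
    have hsplit : f ^ k = π₀ * (w₀ * f ^ (k - 1)) := by
      calc f ^ k = f ^ (k - 1) * f := by rw [← pow_succ, hkk]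
        _ = π₀ * (w₀ * f ^ (k - 1)) := by rw [hfe₀]; ring
    have hgh : (w₀ * f ^ (k - 1)).IsHomogeneous (b₀ + d * (k - 1)) := hw₀h.mul (hf.pow (k - 1))
    have hg0 : w₀ * f ^ (k - 1) ≠ 0 := mul_ne_zero hw₀0 (pow_ne_zero _ hf0)
    have hmemAss : Ideal.span {π₀} ∈ Ass (Ideal.span {f} ^ k) := by
      rw [hIk, hsplit]
      exact span_prime_mem_Ass hπ₀ hg0
    have hcolon0 : (Ideal.span {f} ^ k).colon (Ideal.span {w₀ * f ^ (k - 1)})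
        = Ideal.span {π₀} := by
      rw [hIk, hsplit]
      exact colon_eq hπ₀.ne_zero hg0
    have hub : vNumber (Ideal.span {f} ^ k) ≤ b₀ + d * (k - 1) :=
      Nat.sInf_le ⟨w₀ * f ^ (k - 1), Ideal.span {π₀}, hmemAss, hgh, hcolon0⟩
    have hne : {e | ∃ g : MvPolynomial (Fin n) K, ∃ p ∈ Ass (Ideal.span {f} ^ k),
        g.IsHomogeneous e ∧ (Ideal.span {f} ^ k).colon (Ideal.span {g}) = p}.Nonempty :=
      ⟨b₀ + d * (k - 1), w₀ * f ^ (k - 1), Ideal.span {π₀}, hmemAss, hgh, hcolon0⟩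
    have hmemInf := Nat.sInf_mem hne
    obtain ⟨g, p, hp, hg, hcolon⟩ := hmemInf
    -- lower bound for the sInf element
    obtain ⟨a, b, π, hab, hπ, hπf, hπh, rfl, hα, -⟩ := part1 p hp
    obtain ⟨W, A, B, hfeW, hABW, hπhW, hWh, hπ0W, hW0⟩ := dvd_hom hfk hfk0
      (dvd_pow hπf (by omega))
    have haA : a = A := hπh.inj_right hπhW hπ.ne_zero
    have hBe : B ≤ vNumber (Ideal.span {f} ^ k) := by
      refine colon_lower hπ hWh hW0 hg ?_
      rw [← hfeW, ← hIk]
      exact hcolon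
    have hmemI : Ideal.span {π} ∈ Ass (Ideal.span {f}) := by
      obtain ⟨w', hw'⟩ := hπf
      have hw'0 : w' ≠ 0 := right_ne_zero_of_mul (fun h => hf0 (by rw [hw', h]))
      rw [hw']
      exact span_prime_mem_Ass hπ hw'0
    have hac : a ≤ cNum (Ideal.span {f}) := le_csSup hBdd ⟨Ideal.span {π}, hmemI, hα⟩
    -- arithmetic
    have hdk : d * (k - 1) + d = d * k := by rw [← Nat.mul_succ, Nat.succ_eq_add_one, hkk]
    rw [hαI, ← hcast]
    generalize hm2 : d * k = m2 at hab hABW hdk ⊢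
    generalize hm1 : d * (k - 1) = m1 at hub hdk
    omega
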